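/- Gromov-hyperbolicity of geodesic metric spaces is a quasi-isometry invariant: if f : X → Y is a (λ, C)-quasi-isometry between geodesic metric spaces and X is Gromov-hyperbolic, then Y is Gromov-hyperbolic. -/
import Mathlib


/-!
STATEMENT 7: Gromov-hyperbolicity of geodesic metric spaces is a quasi-isometry
invariant: if `f : X → Y` is a `(λ, C)`-quasi-isometry between geodesic metric
spaces and `X` is Gromov-hyperbolic, then `Y` is Gromov-hyperbolic.
-/
open Set

noncomputable section

variable {X : Type*}

/-- `γ` is a unit-speed geodesic segment from `x` to `y`, parametrized on
`[0, dist x y]`. -/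
def IsGeodesicSegBetween [MetricSpace X] (γ : ℝ → X) (x y : X) : Prop :=
  γ 0 = x ∧ γ (dist x y) = y ∧
    ∀ s ∈ Icc (0 : ℝ) (dist x y), ∀ t ∈ Icc (0 : ℝ) (dist x y),
      dist (γ s) (γ t) = |s - t|

/-- A geodesic metric space: any two points are joined by a geodesic segment. -/
def GeodesicSpace (X : Type*) [MetricSpace X] : Prop :=
  ∀ x y : X, ∃ γ : ℝ → X, IsGeodesicSegBetween γ x y

/-- The image (side) of a geodesic segment from `x` to `y`. -/
def SideSet [MetricSpace X] (γ : ℝ → X) (x y : X) : Set X :=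
  γ '' Icc (0 : ℝ) (dist x y)

/-- A triangle with sides `s₁ s₂ s₃` is `δ`-thin: each side is contained in the
`δ`-neighbourhood of the union of the other two sides. -/
def ThinTriangle [MetricSpace X] (δ : ℝ) (s₁ s₂ s₃ : Set X) : Prop :=
  (∀ p ∈ s₁, ∃ q ∈ s₂ ∪ s₃, dist p q ≤ δ) ∧
  (∀ p ∈ s₂, ∃ q ∈ s₁ ∪ s₃, dist p q ≤ δ) ∧
  (∀ p ∈ s₃, ∃ q ∈ s₁ ∪ s₂, dist p q ≤ δ)

/-- Gromov hyperbolicity of a (geodesic) metric space: there is `δ ≥ 0` such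
that all geodesic triangles are `δ`-thin. -/
def GromovHyperbolic (X : Type*) [MetricSpace X] : Prop :=
  ∃ δ : ℝ, 0 ≤ δ ∧ ∀ (A B C : X) (γa γb γc : ℝ → X),
    IsGeodesicSegBetween γa B C → IsGeodesicSegBetween γb A C →
      IsGeodesicSegBetween γc A B →
        ThinTriangle δ (SideSet γa B C) (SideSet γb A C) (SideSet γc A B)

/-- Euclidean comparison angle at the vertex `p` of the triangle `p x y`. -/
def compAngle [MetricSpace X] (p x y : X) : ℝ :=
  Real.arccos ((dist p x ^ 2 + dist p y ^ 2 - dist x y ^ 2) /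
    (2 * dist p x * dist p y))

/-- `z` lies (metrically) between `x` and `y`. -/
def MetricBtw [MetricSpace X] (x z y : X) : Prop :=
  dist x z + dist z y = dist x y

/-- The (Alexandrov) angle at `p` between the geodesics from `p` to `x` and from
`p` to `y`, as the infimum of comparison angles over points between `p` and the
endpoints; in a nonpositively curved space this is the usual Riemannian angle. -/
def angleAt [MetricSpace X] (p x y : X) : ℝ :=
  sInf {θ : ℝ | ∃ u v : X, MetricBtw p u x ∧ u ≠ p ∧ MetricBtw p v y ∧ v ≠ p ∧
    θ = compAngle p u v}

/-- The CAT(0) comparison inequality: distances from a vertex to points of the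
opposite side of any geodesic triangle are bounded by the corresponding
distances in the Euclidean comparison triangle. -/
def CATzero (X : Type*) [MetricSpace X] : Prop :=
  ∀ (x y z : X) (γ : ℝ → X), IsGeodesicSegBetween γ y z →
    ∀ s ∈ Icc (0 : ℝ) (dist y z),
      dist x (γ s) ^ 2 ≤ (1 - s / dist y z) * dist x y ^ 2 +
        (s / dist y z) * dist x z ^ 2 - s * (dist y z - s)

/-- The comparison angle in the hyperbolic plane (curvature `-1`) at the vertex
adjacent to sides of lengths `b`, `c` and opposite a side of length `a`,
via the hyperbolic law of cosines. -/
def hypCompAngle (a b c : ℝ) : ℝ :=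
  Real.arccos ((Real.cosh b * Real.cosh c - Real.cosh a) /
    (Real.sinh b * Real.sinh c))

/-- The CAT(-1) comparison inequality (comparison with triangles in the
hyperbolic plane of curvature `-1`), via the hyperbolic law of cosines; for a
simply connected complete Riemannian manifold it is equivalent to `sec ≤ -1`. -/
def CATminusOne (X : Type*) [MetricSpace X] : Prop :=
  ∀ (x y z : X) (γ : ℝ → X), IsGeodesicSegBetween γ y z →
    ∀ s ∈ Icc (0 : ℝ) (dist y z),
      Real.cosh (dist x (γ s)) ≤
        Real.cosh (dist x y) * Real.cosh s -
          Real.sinh (dist x y) * Real.sinh s *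
            Real.cos (hypCompAngle (dist x z) (dist x y) (dist y z))

/-- `f` is a `(Λ, C)`-quasi-isometry: it distorts distances at most affinely in
both directions and its image is `C`-dense. -/
def IsQuasiIsometry {Y : Type*} [MetricSpace X] [MetricSpace Y]
    (Λ C : ℝ) (f : X → Y) : Prop :=
  1 ≤ Λ ∧ 0 ≤ C ∧
  (∀ x y : X, (1 / Λ) * dist x y - C ≤ dist (f x) (f y) ∧
    dist (f x) (f y) ≤ Λ * dist x y + C) ∧
  (∀ z : Y, ∃ x : X, dist z (f x) ≤ C)

section Aux

variable {Z : Type*} [MetricSpace Z]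

lemma geod_rev {γ : ℝ → Z} {x y : Z} (h : IsGeodesicSegBetween γ x y) :
    IsGeodesicSegBetween (fun u => γ (dist x y - u)) y x := by
  obtain ⟨h0, hd, hiso⟩ := h
  refine ⟨by simpa using hd, by simp [dist_comm y x, h0], ?_⟩
  intro s hs t ht
  rw [dist_comm y x] at hs ht
  rw [hiso (dist x y - s) ⟨by linarith [hs.2], by linarith [hs.1]⟩
      (dist x y - t) ⟨by linarith [ht.2], by linarith [ht.1]⟩]
  rw [abs_sub_comm]
  ring_nf

lemma sideSet_rev (γ : ℝ → Z) (x y : Z) :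
    SideSet (fun u => γ (dist x y - u)) y x = SideSet γ x y := by
  unfold SideSet
  rw [dist_comm y x]
  ext p
  constructor
  · rintro ⟨u, hu, rfl⟩
    exact ⟨dist x y - u, ⟨by linarith [hu.2], by linarith [hu.1]⟩, rfl⟩
  · rintro ⟨u, hu, rfl⟩
    exact ⟨dist x y - u, ⟨by linarith [hu.2], by linarith [hu.1]⟩, by simp⟩

lemma geod_sub {γ : ℝ → Z} {x y : Z} (h : IsGeodesicSegBetween γ x y)
    {a b : ℝ} (ha : 0 ≤ a) (hab : a ≤ b) (hb : b ≤ dist x y) :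
    IsGeodesicSegBetween (fun u => γ (a + u)) (γ a) (γ b) := by
  obtain ⟨h0, hd, hiso⟩ := h
  have hdab : dist (γ a) (γ b) = b - a := by
    rw [hiso a ⟨ha, by linarith⟩ b ⟨by linarith, hb⟩, abs_of_nonpos (by linarith)]
    ring
  refine ⟨by simp, by rw [hdab]; ring_nf, ?_⟩
  intro s hs t ht
  rw [hdab] at hs ht
  rw [hiso (a + s) ⟨by linarith [hs.1], by linarith [hs.2]⟩
      (a + t) ⟨by linarith [ht.1], by linarith [ht.2]⟩]
  ring_nf

lemma chain_dist {z : ℕ → Z} {n : ℕ} {g₀ : ℝ} (hg : 0 ≤ g₀)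
    (hz : ∀ i < n, dist (z i) (z (i+1)) ≤ g₀) :
    ∀ i j, i ≤ j → j ≤ n → dist (z i) (z j) ≤ g₀ * ((j : ℝ) - i) := by
  intro i j hij hjn
  obtain ⟨d, rfl⟩ := Nat.exists_eq_add_of_le hij
  induction d with
  | zero => simp
  | succ d ihd =>
    have h1 : dist (z i) (z (i + d)) ≤ g₀ * ((i + d : ℕ) - (i:ℝ)) := ihd (by omega) (by omega)
    have h2 : dist (z (i + d)) (z (i + d + 1)) ≤ g₀ := hz _ (by omega)
    calc dist (z i) (z (i + (d+1))) ≤ dist (z i) (z (i+d)) + dist (z (i+d)) (z (i+d+1)) := by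
          have : i + (d+1) = i + d + 1 := by omega
          rw [this]; exact dist_triangle _ _ _
      _ ≤ g₀ * ((i + d : ℕ) - (i:ℝ)) + g₀ := by linarith
      _ = g₀ * ((i + (d+1) : ℕ) - (i:ℝ)) := by push_cast; ring

end Aux
section LemA

variable {Z : Type*} [MetricSpace Z]

/-- Every point of a geodesic joining the endpoints of a `g₀`-chain is within
`δ * k + g₀` of the chain, when the chain has at most `2^k` steps. -/
lemma geod_near_chain (δ g₀ : ℝ) (hδ : 0 ≤ δ) (hg : 0 ≤ g₀)
    (hX : GeodesicSpace Z)
    (hthin : ∀ (A B C : Z) (γa γb γc : ℝ → Z), IsGeodesicSegBetween γa B C →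
      IsGeodesicSegBetween γb A C → IsGeodesicSegBetween γc A B →
      ThinTriangle δ (SideSet γa B C) (SideSet γb A C) (SideSet γc A B)) :
    ∀ (k n : ℕ), n ≤ 2^k → ∀ (z : ℕ → Z), (∀ i < n, dist (z i) (z (i+1)) ≤ g₀) →
    ∀ γ, IsGeodesicSegBetween γ (z 0) (z n) → ∀ p ∈ SideSet γ (z 0) (z n),
    ∃ i ≤ n, dist p (z i) ≤ δ * k + g₀ := by
  intro k
  induction k with
  | zero =>
    intro n hn z hz γ hγ p hp
    interval_cases n
    · obtain ⟨s, hs, rfl⟩ := hp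
      rw [dist_self] at hs
      have : s = 0 := le_antisymm hs.2 hs.1
      subst this
      exact ⟨0, le_refl _, by rw [hγ.1]; simp [hg]⟩
    · obtain ⟨s, hs, rfl⟩ := hp
      refine ⟨0, by omega, ?_⟩
      have h0 : dist (γ s) (γ 0) = |s - 0| :=
        hγ.2.2 s hs 0 ⟨le_refl _, dist_nonneg⟩
      rw [hγ.1] at h0
      rw [h0, abs_of_nonneg (by linarith [hs.1])]
      simp only [Nat.cast_zero, mul_zero, zero_add, sub_zero]
      linarith [hs.2, hz 0 (by omega)]
  | succ k ih =>
    intro n hn z hz γ hγ p hp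
    by_cases hn2 : n ≤ 2^k
    · obtain ⟨i, hi, hdi⟩ := ih n hn2 z hz γ hγ p hp
      refine ⟨i, hi, le_trans hdi ?_⟩
      have : (k : ℝ) ≤ (k + 1 : ℕ) := by push_cast; linarith
      push_cast
      nlinarith [hδ]
    · set m := n / 2 with hm
      have hpow : 2^(k+1) = 2^k + 2^k := by ring
      have hm1 : m ≤ 2^k := by omega
      have hm2 : n - m ≤ 2^k := by omega
      have hmn : m ≤ n := by omega
      obtain ⟨γ₂, hγ₂⟩ := hX (z m) (z n)
      obtain ⟨γ₃, hγ₃⟩ := hX (z m) (z 0)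
      have thin := hthin (z m) (z 0) (z n) γ γ₂ γ₃ hγ hγ₂ hγ₃
      obtain ⟨q, hq, hpq⟩ := thin.1 p hp
      rcases hq with hq | hq
      · -- q on geodesic from z m to z n
        have e1 : z m = (fun i => z (m + i)) 0 := by simp
        have e2 : z n = (fun i => z (m + i)) (n - m) := by
          simp only []
          congr 1
          omega
        rw [e1, e2] at hγ₂ hq
        obtain ⟨i, hi, hqi⟩ := ih (n - m) hm2 (fun i => z (m + i))
          (fun i hi => hz (m + i) (by omega)) γ₂ hγ₂ q hq
        refine ⟨m + i, by omega, ?_⟩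
        calc dist p (z (m + i)) ≤ dist p q + dist q (z (m+i)) := dist_triangle _ _ _
          _ ≤ δ + (δ * k + g₀) := by exact add_le_add hpq hqi
          _ ≤ δ * (k+1 : ℕ) + g₀ := by push_cast; nlinarith
      · -- q on geodesic from z m to z 0
        have e1 : z m = (fun i => z (m - i)) 0 := by simp
        have e2 : z 0 = (fun i => z (m - i)) m := by simp
        rw [e1, e2] at hγ₃ hq
        have hw : ∀ i < m, dist (z (m - i)) (z (m - (i+1))) ≤ g₀ := by
          intro i him
          have e3 : m - i = (m - (i+1)) + 1 := by omega
          rw [e3, dist_comm]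
          exact hz _ (by omega)
        obtain ⟨i, hi, hqi⟩ := ih m hm1 (fun i => z (m - i)) hw γ₃ hγ₃ q hq
        refine ⟨m - i, by omega, ?_⟩
        calc dist p (z (m - i)) ≤ dist p q + dist q (z (m-i)) := dist_triangle _ _ _
          _ ≤ δ + (δ * k + g₀) := add_le_add hpq hqi
          _ ≤ δ * (k+1 : ℕ) + g₀ := by push_cast; nlinarith

end LemA
section Aux3

variable {Z : Type*} [MetricSpace Z]

lemma chain_concat {w₁ w₂ : ℕ → Z} {n₁ n₂ : ℕ} {g₀ : ℝ}
    (h1 : ∀ i < n₁, dist (w₁ i) (w₁ (i+1)) ≤ g₀)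
    (h2 : ∀ i < n₂, dist (w₂ i) (w₂ (i+1)) ≤ g₀)
    (hj : dist (w₁ n₁) (w₂ 0) ≤ g₀) :
    ∃ w : ℕ → Z, w 0 = w₁ 0 ∧ w (n₁ + 1 + n₂) = w₂ n₂ ∧
      (∀ i < n₁ + 1 + n₂, dist (w i) (w (i+1)) ≤ g₀) ∧
      (∀ i ≤ n₁ + 1 + n₂, (∃ j ≤ n₁, w i = w₁ j) ∨ (∃ j ≤ n₂, w i = w₂ j)) := by
  refine ⟨fun k => if k ≤ n₁ then w₁ k else w₂ (k - (n₁+1)), by simp, ?_, ?_, ?_⟩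
  · have hgt : ¬ (n₁ + 1 + n₂ ≤ n₁) := by omega
    simp only [hgt, if_false]
    congr 1
    omega
  · intro i hi
    by_cases hc1 : i + 1 ≤ n₁
    · simp only [show i ≤ n₁ by omega, if_true, hc1, if_true]
      exact h1 i (by omega)
    · by_cases hc2 : i ≤ n₁
      · have : i = n₁ := by omega
        subst this
        simp only [le_refl, if_true, hc1, if_false]
        have : i + 1 - (i + 1) = 0 := by omega
        rw [this]
        exact hj
      · simp only [hc2, if_false, show ¬ (i+1 ≤ n₁) by omega, if_false]
        have e : i + 1 - (n₁ + 1) = (i - (n₁+1)) + 1 := by omega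
        rw [e]
        exact h2 _ (by omega)
  · intro i hi
    by_cases hc : i ≤ n₁
    · exact Or.inl ⟨i, hc, by simp [hc]⟩
    · exact Or.inr ⟨i - (n₁+1), by omega, by simp [hc]⟩

lemma chain_concat_trunc {w₂ : ℕ → Z} {n₂ : ℕ} {g₀ : ℝ}
    (h2 : ∀ i < n₂, dist (w₂ i) (w₂ (i+1)) ≤ g₀) : True := trivial

/-- A unit chain along a geodesic from `x` to `y`. -/
lemma connector_chain (hX : GeodesicSpace Z) (x y : Z) :
    ∃ (w : ℕ → Z) (m : ℕ), w 0 = x ∧ w m = y ∧ (m : ℝ) ≤ dist x y + 1 ∧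
      (∀ i < m, dist (w i) (w (i+1)) ≤ 1) ∧ (∀ i, dist x (w i) ≤ dist x y) := by
  obtain ⟨γ, hγ⟩ := hX x y
  set d := dist x y with hd
  have hd0 : 0 ≤ d := dist_nonneg
  refine ⟨fun i => γ (min (i : ℝ) d), ⌈d⌉₊, ?_, ?_, ?_, ?_, ?_⟩
  · simp only [Nat.cast_zero, min_eq_left hd0]
    exact hγ.1
  · show γ (min ((⌈d⌉₊:ℕ) : ℝ) d) = y
    rw [min_eq_right (Nat.le_ceil d)]
    exact hγ.2.1
  · have := Nat.ceil_lt_add_one hd0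
    linarith
  · intro i him
    have hm1 : (0:ℝ) ≤ min (i:ℝ) d := le_min (by positivity) hd0
    have hm2 : min (i:ℝ) d ≤ d := min_le_right _ _
    have hm1' : (0:ℝ) ≤ min ((i:ℝ)+1) d := le_min (by positivity) hd0
    have hm2' : min ((i:ℝ)+1) d ≤ d := min_le_right _ _
    have := hγ.2.2 (min (i:ℝ) d) ⟨hm1, hm2⟩ (min ((i:ℝ)+1) d) ⟨hm1', hm2'⟩
    push_cast
    rw [this]
    have hmono : min (i:ℝ) d ≤ min ((i:ℝ)+1) d := min_le_min (by linarith) le_rfl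
    have hle : min ((i:ℝ)+1) d ≤ min (i:ℝ) d + 1 := by
      rcases le_total ((i:ℝ)) d with h | h
      · calc min ((i:ℝ)+1) d ≤ (i:ℝ) + 1 := min_le_left _ _
          _ = min (i:ℝ) d + 1 := by rw [min_eq_left h]
      · calc min ((i:ℝ)+1) d ≤ d := min_le_right _ _
          _ ≤ min (i:ℝ) d + 1 := by rw [min_eq_right h]; linarith
    rw [abs_le]
    constructor <;> linarith
  · intro i
    have hm1 : (0:ℝ) ≤ min (i:ℝ) d := le_min (by positivity) hd0
    have hm2 : min (i:ℝ) d ≤ d := min_le_right _ _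
    have h0 := hγ.2.2 0 ⟨le_refl _, hd0⟩ (min (i:ℝ) d) ⟨hm1, hm2⟩
    rw [hγ.1] at h0
    show dist x (γ (min (i:ℝ) d)) ≤ d
    rw [h0, zero_sub, abs_neg, abs_of_nonneg hm1]
    exact hm2

/-- A sub-chain (possibly reversed) of a chain. -/
lemma chain_segment {z : ℕ → Z} {n : ℕ} {g₀ : ℝ}
    (hz : ∀ i < n, dist (z i) (z (i+1)) ≤ g₀) (i₁ i₂ : ℕ) (hi1 : i₁ ≤ n) (hi2 : i₂ ≤ n) :
    ∃ (w : ℕ → Z) (m : ℕ), w 0 = z i₁ ∧ w m = z i₂ ∧ ((m:ℝ) = |(i₁:ℝ) - i₂|) ∧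
      (∀ j < m, dist (w j) (w (j+1)) ≤ g₀) ∧ (∀ j, ∃ i ≤ n, w j = z i) := by
  rcases le_total i₁ i₂ with hle | hle
  · refine ⟨fun j => z (i₁ + min j (i₂ - i₁)), i₂ - i₁, by simp, ?_, ?_, ?_, ?_⟩
    · simp only [min_self]
      congr 1
      omega
    · rw [abs_sub_comm, abs_of_nonneg (by push_cast [hle]; linarith [(Nat.cast_le (α := ℝ)).2 hle])]
      push_cast [hle]
      ring
    · intro j hj
      have e1 : min j (i₂ - i₁) = j := min_eq_left (by omega)
      have e2 : min (j+1) (i₂ - i₁) = j + 1 := min_eq_left (by omega)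
      simp only [e1, e2]
      have : i₁ + (j+1) = (i₁ + j) + 1 := by omega
      rw [this]
      exact hz _ (by omega)
    · intro j
      exact ⟨i₁ + min j (i₂ - i₁), by omega, rfl⟩
  · refine ⟨fun j => z (i₁ - min j (i₁ - i₂)), i₁ - i₂, by simp, ?_, ?_, ?_, ?_⟩
    · simp only [min_self]
      congr 1
      omega
    · rw [abs_of_nonneg (by push_cast [hle]; linarith [(Nat.cast_le (α := ℝ)).2 hle])]
      push_cast [hle]
      ring
    · intro j hj
      have e1 : min j (i₁ - i₂) = j := min_eq_left (by omega)
      have e2 : min (j+1) (i₁ - i₂) = j + 1 := min_eq_left (by omega)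
      simp only [e1, e2]
      have e3 : i₁ - j = (i₁ - (j+1)) + 1 := by omega
      rw [e3, dist_comm]
      exact hz _ (by omega)
    · intro j
      exact ⟨i₁ - min j (i₁ - i₂), by omega, rfl⟩

lemma log_le_two_sqrt {x : ℝ} (hx : 0 < x) : Real.log x ≤ 2 * Real.sqrt x := by
  have h1 : Real.log (Real.sqrt x) ≤ Real.sqrt x - 1 :=
    Real.log_le_sub_one_of_pos (Real.sqrt_pos.2 hx)
  have h2 : Real.log (Real.sqrt x) = Real.log x / 2 := Real.log_sqrt hx.le
  linarith [h2 ▸ h1]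

lemma solver (δ a b g₀ : ℝ) (hδ : 0 ≤ δ) (ha : 1 ≤ a) (hb : 1 ≤ b) (hg : 0 ≤ g₀) :
    ∃ M : ℝ, 1 ≤ M ∧ ∀ t, M ≤ t → δ * (Real.logb 2 (a*t+b) + 1) + g₀ < t := by
  have hlog2 : 0 < Real.log 2 := Real.log_pos (by norm_num)
  set c₁ : ℝ := 2 * δ * Real.sqrt (a + b) / Real.log 2 with hc₁
  set c₂ : ℝ := δ + g₀ + 1 with hc₂
  have hc₁0 : 0 ≤ c₁ := by positivity
  have hc₂1 : 1 ≤ c₂ := by linarith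
  refine ⟨(c₁ + c₂)^2 + 1, by nlinarith, ?_⟩
  intro t ht
  have ht1 : 1 ≤ t := by nlinarith
  have hx : (0:ℝ) < a * t + b := by nlinarith
  have hst : 1 ≤ Real.sqrt t := by
    rw [show (1:ℝ) = Real.sqrt 1 by simp]
    exact Real.sqrt_le_sqrt ht1
  have hst2 : Real.sqrt t * Real.sqrt t = t := Real.mul_self_sqrt (by linarith)
  -- log bound
  have h1 : Real.log (a * t + b) ≤ 2 * Real.sqrt (a + b) * Real.sqrt t := by
    have := log_le_two_sqrt hx
    have hsq : Real.sqrt (a * t + b) ≤ Real.sqrt (a + b) * Real.sqrt t := by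
      rw [← Real.sqrt_mul (by linarith) t]
      apply Real.sqrt_le_sqrt
      nlinarith
    nlinarith [Real.sqrt_nonneg (a+b), Real.sqrt_nonneg t]
  have h2 : Real.logb 2 (a*t+b) ≤ 2 * Real.sqrt (a + b) * Real.sqrt t / Real.log 2 := by
    rw [Real.logb, div_le_div_iff_of_pos_right hlog2]  -- maybe wrong name
    exact h1
  have h3 : δ * Real.logb 2 (a*t+b) ≤ c₁ * Real.sqrt t := by
    rw [hc₁]
    calc δ * Real.logb 2 (a*t+b) ≤ δ * (2 * Real.sqrt (a + b) * Real.sqrt t / Real.log 2) := by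
          apply mul_le_mul_of_nonneg_left h2 hδ
      _ = 2 * δ * Real.sqrt (a + b) / Real.log 2 * Real.sqrt t := by ring
  have hlt : c₁ + c₂ < Real.sqrt t := by
    have : Real.sqrt ((c₁+c₂)^2) < Real.sqrt t := by
      apply Real.sqrt_lt_sqrt (by positivity)
      nlinarith
    rwa [Real.sqrt_sq (by positivity)] at this
  have key : (c₁ + c₂) * Real.sqrt t < t := by nlinarith
  calc δ * (Real.logb 2 (a*t+b) + 1) + g₀ = δ * Real.logb 2 (a*t+b) + (δ + g₀) := by ring
    _ ≤ c₁ * Real.sqrt t + (c₂ - 1) := by linarith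
    _ ≤ (c₁ + c₂) * Real.sqrt t - 1 := by nlinarith
    _ < t := by linarith

end Aux3
section Morse
set_option maxHeartbeats 2000000

variable {Z : Type*} [MetricSpace Z]

/-- **Morse lemma / stability of quasi-geodesic chains**: in a hyperbolic geodesic
space, a geodesic joining the endpoints of a quasi-geodesic chain stays within a
uniform distance `M` of the chain. -/
lemma morse (δ g₀ Λ K₁ : ℝ) (hδ : 0 ≤ δ) (hg : 1 ≤ g₀) (hΛ : 1 ≤ Λ) (hK : 0 ≤ K₁)
    (hX : GeodesicSpace Z)
    (hthin : ∀ (A B C : Z) (γa γb γc : ℝ → Z), IsGeodesicSegBetween γa B C →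
      IsGeodesicSegBetween γb A C → IsGeodesicSegBetween γc A B →
      ThinTriangle δ (SideSet γa B C) (SideSet γb A C) (SideSet γc A B)) :
    ∃ M : ℝ, 1 ≤ M ∧ ∀ (n : ℕ) (z : ℕ → Z),
      (∀ i < n, dist (z i) (z (i+1)) ≤ g₀) →
      (∀ i ≤ n, ∀ j ≤ n, |(i:ℝ) - (j:ℝ)| ≤ Λ * dist (z i) (z j) + K₁) →
      ∀ γ, IsGeodesicSegBetween γ (z 0) (z n) →
      ∀ s ∈ Icc (0:ℝ) (dist (z 0) (z n)), ∃ i ≤ n, dist (γ s) (z i) ≤ M := by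
  obtain ⟨M, hM1, hM⟩ := solver δ (6*Λ+2) (K₁+5) g₀ hδ (by linarith) (by linarith) (by linarith)
  refine ⟨M, hM1, ?_⟩
  intro n z hz1 hz2 γ hγ
  set L := dist (z 0) (z n) with hLdef
  have hL0 : 0 ≤ L := dist_nonneg
  have hFne : (Finset.range (n+1)).Nonempty := ⟨0, by simp⟩
  set h : ℝ → ℝ := fun s => (Finset.range (n+1)).inf' hFne (fun i => dist (γ s) (z i)) with hhdef
  have hhle : ∀ s : ℝ, ∀ i ≤ n, h s ≤ dist (γ s) (z i) := by
    intro s i hi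
    exact Finset.inf'_le _ (Finset.mem_range.2 (by omega))
  have hhex : ∀ s : ℝ, ∃ i ≤ n, h s = dist (γ s) (z i) := by
    intro s
    obtain ⟨i, hi, he⟩ := Finset.exists_mem_eq_inf' hFne (fun i => dist (γ s) (z i))
    exact ⟨i, by simpa [Nat.lt_succ_iff] using Finset.mem_range.1 hi, he⟩
  have hh0 : ∀ s : ℝ, 0 ≤ h s := by
    intro s
    obtain ⟨i, _, he⟩ := hhex s
    rw [he]; exact dist_nonneg
  set S := h '' Icc (0:ℝ) L with hSdef
  have hSne : S.Nonempty := ⟨h 0, 0, ⟨le_refl _, hL0⟩, rfl⟩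
  have hSbdd : BddAbove S := by
    refine ⟨L, ?_⟩
    rintro d ⟨s, hs, rfl⟩
    have h0 : dist (γ s) (γ 0) = |s - 0| := hγ.2.2 s hs 0 ⟨le_refl _, hL0⟩
    rw [hγ.1] at h0
    calc h s ≤ dist (γ s) (z 0) := hhle s 0 (by omega)
      _ = |s - 0| := h0
      _ ≤ L := by rw [abs_of_nonneg (by linarith [hs.1]), sub_zero]; exact hs.2
  set D := sSup S with hDdef
  have hDle : ∀ s ∈ Icc (0:ℝ) L, h s ≤ D := fun s hs => le_csSup hSbdd ⟨s, hs, rfl⟩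
  have hD0 : 0 ≤ D := le_trans (hh0 0) (hDle 0 ⟨le_refl _, hL0⟩)
  -- the key self-improving estimate
  have key : ∀ ε : ℝ, 0 < ε → ε ≤ 1 →
      D ≤ δ * (Real.logb 2 ((6*Λ+2) * D + (K₁+5)) + 1) + g₀ + 2*ε := by
    intro ε hε hε1
    obtain ⟨d₀, hd₀S, hd₀⟩ := exists_lt_of_lt_csSup hSne (show D - ε < D by linarith)
    obtain ⟨s₀, hs₀, rfl⟩ := hd₀S
    have hD₀D : h s₀ ≤ D := hDle s₀ hs₀
    have hD₀0 : 0 ≤ h s₀ := hh0 s₀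
    set sm := max 0 (s₀ - 2*(h s₀)) with hsmdef
    set sp := min L (s₀ + 2*(h s₀)) with hspdef
    have hsm0 : 0 ≤ sm := le_max_left _ _
    have hsms : sm ≤ s₀ := max_le hs₀.1 (by linarith)
    have hssp : s₀ ≤ sp := le_min hs₀.2 (by linarith)
    have hspL : sp ≤ L := min_le_left _ _
    have hsmL : sm ≤ L := le_trans hsms hs₀.2
    have hsp0 : 0 ≤ sp := le_trans hsm0 (le_trans hsms hssp)
    have hdpm : dist (γ s₀) (γ sm) = s₀ - sm := by
      rw [hγ.2.2 s₀ hs₀ sm ⟨hsm0, hsmL⟩, abs_of_nonneg (by linarith)]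
    have hdpp : dist (γ s₀) (γ sp) = sp - s₀ := by
      rw [hγ.2.2 s₀ hs₀ sp ⟨hsp0, hspL⟩, abs_of_nonpos (by linarith), neg_sub]
    have hdpm2 : dist (γ s₀) (γ sm) ≤ 2*(h s₀) := by
      rw [hdpm]
      have := le_max_right 0 (s₀ - 2*(h s₀))
      linarith
    have hdpp2 : dist (γ s₀) (γ sp) ≤ 2*(h s₀) := by
      rw [hdpp]
      have := min_le_right L (s₀ + 2*(h s₀))
      linarith
    -- left connector chain from (γ sm) down to a chain point
    obtain ⟨w₁, m₁, im, him, hw₁0, hw₁m, hdm, hm₁le, hw₁gap, hw₁low⟩ :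
        ∃ (w : ℕ → Z) (m i : ℕ), i ≤ n ∧ w 0 = γ sm ∧ w m = z i ∧ dist (γ sm) (z i) ≤ D ∧
          (m:ℝ) ≤ D + 1 ∧ (∀ j < m, dist (w j) (w (j+1)) ≤ g₀) ∧
          (∀ j, D - 2*ε ≤ dist (γ s₀) (w j)) := by
      by_cases hbm : s₀ - 2*(h s₀) ≤ 0
      · have hsm_eq : sm = 0 := max_eq_left (by linarith)
        have hpm_eq : γ sm = z 0 := by rw [hsm_eq, hγ.1]
        refine ⟨fun _ => z 0, 0, 0, by omega, hpm_eq.symm, rfl, by rw [hpm_eq, dist_self]; exact hD0,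
          by push_cast; linarith, by omega, ?_⟩
        intro j
        have := hhle s₀ 0 (by omega)
        linarith
      · have hsm_eq : sm = s₀ - 2*(h s₀) := max_eq_right (by linarith)
        obtain ⟨i, hi, hei⟩ := hhex sm
        have hdi : dist (γ sm) (z i) ≤ D := by rw [← hei]; exact hDle sm ⟨hsm0, hsmL⟩
        obtain ⟨w, m, hw0, hwm, hmle, hwgap, hwnear⟩ := connector_chain hX (γ sm) (z i)
        refine ⟨w, m, i, hi, hw0, hwm, hdi, by linarith, fun j hj => (hwgap j hj).trans hg, ?_⟩
        intro j
        have h1 : dist (γ sm) (w j) ≤ dist (γ sm) (z i) := hwnear j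
        have h2 : dist (γ s₀) (γ sm) ≤ dist (γ s₀) (w j) + dist (w j) (γ sm) := dist_triangle _ _ _
        rw [dist_comm (w j) (γ sm)] at h2
        have h3 : dist (γ s₀) (γ sm) = 2*(h s₀) := by rw [hdpm, hsm_eq]; ring
        linarith
    -- right connector chain from a chain point up to (γ sp)
    obtain ⟨w₃, m₃, ip, hip, hw₃0, hw₃m, hdp, hm₃le, hw₃gap, hw₃low⟩ :
        ∃ (w : ℕ → Z) (m i : ℕ), i ≤ n ∧ w 0 = z i ∧ w m = γ sp ∧ dist (γ sp) (z i) ≤ D ∧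
          (m:ℝ) ≤ D + 1 ∧ (∀ j < m, dist (w j) (w (j+1)) ≤ g₀) ∧
          (∀ j, D - 2*ε ≤ dist (γ s₀) (w j)) := by
      by_cases hbp : L ≤ s₀ + 2*(h s₀)
      · have hsp_eq : sp = L := min_eq_left hbp
        have hpp_eq : γ sp = z n := by rw [hsp_eq, hγ.2.1]
        refine ⟨fun _ => z n, 0, n, le_refl _, rfl, hpp_eq.symm,
          by rw [hpp_eq, dist_self]; exact hD0, by push_cast; linarith, by omega, ?_⟩
        intro j
        have := hhle s₀ n (le_refl _)
        linarith
      · have hsp_eq : sp = s₀ + 2*(h s₀) := min_eq_right (by linarith [not_le.1 hbp])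
        obtain ⟨i, hi, hei⟩ := hhex sp
        have hdi : dist (γ sp) (z i) ≤ D := by rw [← hei]; exact hDle sp ⟨hsp0, hspL⟩
        obtain ⟨w', m', hw0, hwm, hmle, hwgap, hwnear⟩ := connector_chain hX (γ sp) (z i)
        refine ⟨fun j => w' (m' - j), m', i, hi,
          by show w' (m' - 0) = z i; rw [Nat.sub_zero]; exact hwm,
          by show w' (m' - m') = γ sp; rw [Nat.sub_self]; exact hw0,
          hdi, by linarith, ?_, ?_⟩
        · intro j hj
          show dist (w' (m' - j)) (w' (m' - (j+1))) ≤ g₀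
          have e : m' - j = (m' - (j+1)) + 1 := by omega
          rw [e, dist_comm]
          exact ((hwgap _ (by omega)).trans hg)
        · intro j
          have h1 : dist (γ sp) (w' (m' - j)) ≤ dist (γ sp) (z i) := hwnear _
          have h2 : dist (γ s₀) (γ sp) ≤ dist (γ s₀) (w' (m' - j)) + dist (w' (m' - j)) (γ sp) :=
            dist_triangle _ _ _
          rw [dist_comm (w' (m' - j)) (γ sp)] at h2
          have h3 : dist (γ s₀) (γ sp) = 2*(h s₀) := by rw [hdpp, hsp_eq]; ring
          linarith
    -- middle chain along z from `im` to `ip`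
    obtain ⟨w₂, m₂, hw₂0, hw₂m, hm₂eq, hw₂gap, hw₂mem⟩ := chain_segment hz1 im ip him hip
    have hm₂le : (m₂:ℝ) ≤ 6*Λ*D + K₁ := by
      have hdist : dist (z im) (z ip) ≤ 6*D := by
        have t1 : dist (z im) (z ip) ≤ dist (z im) (γ sm) + dist (γ sm) (γ sp)
            + dist (γ sp) (z ip) := dist_triangle4 _ _ _ _
        have t2 : dist (γ sm) (γ sp) ≤ dist (γ sm) (γ s₀) + dist (γ s₀) (γ sp) :=
          dist_triangle _ _ _
        rw [dist_comm (z im) (γ sm)] at t1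
        rw [dist_comm (γ sm) (γ s₀)] at t2
        linarith [hdm, hdp, hdpm2, hdpp2, hD₀D]
      have := hz2 im him ip hip
      rw [hm₂eq]
      nlinarith [dist_nonneg (x := z im) (y := z ip)]
    -- concatenate the three chains
    obtain ⟨W₁₂, hW₁₂0, hW₁₂m, hW₁₂gap, hW₁₂mem⟩ :=
      chain_concat hw₁gap hw₂gap (by rw [hw₁m, hw₂0, dist_self]; linarith)
    obtain ⟨W, hW0, hWm, hWgap, hWmem⟩ :=
      chain_concat hW₁₂gap hw₃gap (by rw [hW₁₂m, hw₂m, hw₃0, dist_self]; linarith)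
    set N := m₁ + 1 + m₂ + 1 + m₃ with hNdef
    have hWm' : W N = γ sp := hWm.trans hw₃m
    have hW0' : W 0 = γ sm := by rw [hW0, hW₁₂0, hw₁0]
    -- the restricted geodesic
    have hγ' : IsGeodesicSegBetween (fun u => γ (sm + u)) (γ sm) (γ sp) :=
      geod_sub hγ hsm0 (le_trans hsms hssp) hspL
    have hγ'' : IsGeodesicSegBetween (fun u => γ (sm + u)) (W 0) (W N) := by
      rw [hW0', hWm']; exact hγ'
    have hdmp : dist (W 0) (W N) = sp - sm := by
      rw [hW0', hWm', hγ.2.2 sm ⟨hsm0, hsmL⟩ sp ⟨hsp0, hspL⟩, abs_of_nonpos (by linarith), neg_sub]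
    have hp : γ s₀ ∈ SideSet (fun u => γ (sm + u)) (W 0) (W N) := by
      refine ⟨s₀ - sm, ⟨by linarith, by rw [hdmp]; linarith⟩, ?_⟩
      show γ (sm + (s₀ - sm)) = γ s₀
      congr 1
      ring
    -- apply the subdivision lemma
    set k := Nat.log 2 N + 1 with hkdef
    have hNk : N ≤ 2^k := le_of_lt (Nat.lt_pow_succ_log_self (by norm_num) N)
    obtain ⟨j, hjN, hdj⟩ := geod_near_chain δ g₀ hδ (by linarith) hX hthin k N hNk W hWgap
      (fun u => γ (sm + u)) hγ'' (γ s₀) hp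
    -- lower bound on the distance from γ s₀ to any point of W
    have hlow : D - 2*ε ≤ dist (γ s₀) (W j) := by
      rcases hWmem j hjN with ⟨j', hj', hej⟩ | ⟨j', hj', hej⟩
      · rcases hW₁₂mem j' hj' with ⟨j'', hj'', hej'⟩ | ⟨j'', hj'', hej'⟩
        · rw [hej, hej']; exact hw₁low j''
        · rw [hej, hej']
          obtain ⟨i, hi, hei⟩ := hw₂mem j''
          rw [hei]
          have := hhle s₀ i hi
          linarith
      · rw [hej]; exact hw₃low j'
    -- upper bound on N
    have hNle : (N:ℝ) ≤ (6*Λ+2)*D + (K₁+5) := by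
      rw [hNdef]
      push_cast
      nlinarith
    -- convert Nat.log to logb
    have hN1 : 0 < N := by omega
    have hlogb : (Nat.log 2 N : ℝ) ≤ Real.logb 2 ((6*Λ+2)*D + (K₁+5)) := by
      have h2N : ((2:ℝ))^(Nat.log 2 N) ≤ (N:ℝ) := by
        exact_mod_cast Nat.pow_log_le_self 2 (by omega)
      have e1 : Real.logb 2 ((2:ℝ)^(Nat.log 2 N)) = (Nat.log 2 N : ℝ) := by
        rw [Real.logb_pow, Real.logb_self_eq_one (by norm_num)]
        ring
      calc (Nat.log 2 N : ℝ) = Real.logb 2 ((2:ℝ)^(Nat.log 2 N)) := e1.symm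
        _ ≤ Real.logb 2 (N:ℝ) := Real.logb_le_logb_of_le (by norm_num) (by positivity) h2N
        _ ≤ Real.logb 2 ((6*Λ+2)*D + (K₁+5)) :=
            Real.logb_le_logb_of_le (by norm_num) (by exact_mod_cast hN1) hNle
    have hkcast : (k:ℝ) = (Nat.log 2 N : ℝ) + 1 := by rw [hkdef]; push_cast; ring
    have : D - 2*ε ≤ δ * ((Nat.log 2 N : ℝ) + 1) + g₀ := by
      rw [← hkcast]
      linarith [hlow.trans hdj]
    nlinarith
  -- pass to the limit ε → 0 and conclude
  have hDfin : D ≤ δ * (Real.logb 2 ((6*Λ+2)*D + (K₁+5)) + 1) + g₀ := by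
    apply le_of_forall_pos_le_add
    intro ε hε
    have h1 := key (min (ε/2) 1) (by positivity) (min_le_right _ _)
    have h2 : 2 * min (ε/2) 1 ≤ ε := by
      have := min_le_left (ε/2) 1
      linarith
    linarith
  have hDM : D < M := by
    by_contra hcon
    push_neg at hcon
    have := hM D hcon
    linarith
  intro s hs
  obtain ⟨i, hi, hei⟩ := hhex s
  exact ⟨i, hi, by rw [← hei]; exact le_of_lt (lt_of_le_of_lt (hDle s hs) hDM)⟩

end Morse
section LemC
set_option maxHeartbeats 1000000

variable {Z : Type*} [MetricSpace Z]

/-- Converse direction of stability: each point of a quasi-geodesic chain is close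
to the geodesic joining its endpoints. -/
lemma chain_near_geod_pt (Λ K₁ g₀ M : ℝ) (hΛ : 1 ≤ Λ) (hK : 0 ≤ K₁) (hg : 1 ≤ g₀) (hM : 0 ≤ M)
    {n : ℕ} {z : ℕ → Z} (hz1 : ∀ i < n, dist (z i) (z (i+1)) ≤ g₀)
    (hz2 : ∀ i ≤ n, ∀ j ≤ n, |(i:ℝ) - (j:ℝ)| ≤ Λ * dist (z i) (z j) + K₁)
    {γ : ℝ → Z} (hγ : IsGeodesicSegBetween γ (z 0) (z n))
    (hB : ∀ s ∈ Icc (0:ℝ) (dist (z 0) (z n)), ∃ i ≤ n, dist (γ s) (z i) ≤ M) :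
    ∀ i ≤ n, ∃ s ∈ Icc (0:ℝ) (dist (z 0) (z n)),
      dist (z i) (γ s) ≤ M + g₀ * (Λ*(2*M+1) + Λ*M + 2*K₁) := by
  intro i hi
  set L := dist (z 0) (z n) with hLdef
  have hL0 : 0 ≤ L := dist_nonneg
  set T := ⌈L⌉₊ with hTdef
  have htmem : ∀ a : ℕ, min (a:ℝ) L ∈ Icc (0:ℝ) L :=
    fun a => ⟨le_min (by positivity) hL0, min_le_right _ _⟩
  have hch : ∀ a : ℕ, ∃ i ≤ n, dist (γ (min (a:ℝ) L)) (z i) ≤ M :=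
    fun a => hB _ (htmem a)
  choose j hjn hjd using hch
  set B := Λ*(2*M+1) + Λ*M + 2*K₁ with hBdef
  have hB0 : 0 ≤ B := by nlinarith
  -- distance between chain points in terms of indices
  have hzz : ∀ i' ≤ n, ∀ k ≤ n, dist (z i') (z k) ≤ g₀ * |(i':ℝ) - (k:ℝ)| := by
    intro i' hi' k hk
    rcases le_total i' k with hle | hle
    · have h1 := chain_dist (by linarith : (0:ℝ) ≤ g₀) hz1 i' k hle hk
      have hc : ((i':ℕ):ℝ) ≤ (k:ℝ) := by exact_mod_cast hle
      rwa [abs_of_nonpos (by linarith), neg_sub]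
    · have h1 := chain_dist (by linarith : (0:ℝ) ≤ g₀) hz1 k i' hle hi'
      have hc : ((k:ℕ):ℝ) ≤ (i':ℝ) := by exact_mod_cast hle
      rw [dist_comm]
      rwa [abs_of_nonneg (by linarith)]
  -- the unified concluding step
  have main : ∀ a : ℕ, |(i:ℝ) - (j a:ℝ)| ≤ B →
      ∃ s ∈ Icc (0:ℝ) L, dist (z i) (γ s) ≤ M + g₀ * B := by
    intro a hab
    refine ⟨min (a:ℝ) L, htmem a, ?_⟩
    have t1 : dist (z i) (γ (min (a:ℝ) L)) ≤ dist (z i) (z (j a)) + dist (z (j a)) (γ (min (a:ℝ) L)) :=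
      dist_triangle _ _ _
    have t2 : dist (z (j a)) (γ (min (a:ℝ) L)) ≤ M := by rw [dist_comm]; exact hjd a
    have t3 : dist (z i) (z (j a)) ≤ g₀ * |(i:ℝ) - (j a:ℝ)| := hzz i hi (j a) (hjn a)
    have t4 : g₀ * |(i:ℝ) - (j a:ℝ)| ≤ g₀ * B :=
      mul_le_mul_of_nonneg_left hab (by linarith)
    linarith
  -- endpoint estimates
  have hj0 : (j 0 : ℝ) ≤ Λ*M + K₁ := by
    have e0 : γ (min ((0:ℕ):ℝ) L) = z 0 := by
      rw [show min ((0:ℕ):ℝ) L = 0 by rw [Nat.cast_zero]; exact min_eq_left hL0, hγ.1]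
    have h2 := hz2 (j 0) (hjn 0) 0 (by omega)
    have hd : dist (z (j 0)) (z 0) ≤ M := by
      rw [← e0, dist_comm]
      exact hjd 0
    rw [Nat.cast_zero, sub_zero, abs_of_nonneg (by positivity)] at h2
    nlinarith
  by_cases hP0 : j 0 ≤ i
  · have hPa' : j (Nat.findGreatest (fun a => j a ≤ i) T) ≤ i :=
      Nat.findGreatest_spec (P := fun a => j a ≤ i) (m := 0) (n := T) (by omega) hP0
    have ha'T : Nat.findGreatest (fun a => j a ≤ i) T ≤ T :=
      Nat.findGreatest_le (P := fun a => j a ≤ i) T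
    have hgtall : ∀ k, Nat.findGreatest (fun a => j a ≤ i) T < k → k ≤ T → ¬ (j k ≤ i) :=
      fun k h1 h2 => Nat.findGreatest_is_greatest (P := fun a => j a ≤ i) h1 h2
    set a' := Nat.findGreatest (fun a => j a ≤ i) T with ha'def
    by_cases haT : a' = T
    · -- the last sample already projects before i : use the endpoint estimate at L
      have eT : γ (min ((T:ℕ):ℝ) L) = z n := by
        rw [show min ((T:ℕ):ℝ) L = L from min_eq_right (Nat.le_ceil L), hγ.2.1]
      have h2 := hz2 n (le_refl n) (j T) (hjn T)
      have hd : dist (z n) (z (j T)) ≤ M := by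
        rw [← eT]
        exact hjd T
      have h3 : (n:ℝ) - (j T:ℝ) ≤ Λ*M + K₁ := by
        have := le_abs_self ((n:ℝ) - (j T:ℝ))
        nlinarith
      apply main a'
      have hiT : (i:ℝ) - (j a':ℝ) ≤ (n:ℝ) - (j T:ℝ) := by
        rw [haT]
        have : (i:ℝ) ≤ (n:ℝ) := by exact_mod_cast hi
        linarith
      have hge : (0:ℝ) ≤ (i:ℝ) - (j a':ℝ) := by
        have : ((j a':ℕ):ℝ) ≤ (i:ℝ) := by exact_mod_cast hPa'
        linarith
      rw [abs_of_nonneg hge]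
      nlinarith
    · -- between two consecutive samples the projection index crosses i
      have hgt : ¬ (j (a'+1) ≤ i) := hgtall (a'+1) (by omega) (by omega)
      push_neg at hgt
      -- jump estimate between samples a' and a'+1
      have hlip : dist (γ (min ((a':ℕ):ℝ) L)) (γ (min (((a'+1:ℕ)):ℝ) L)) ≤ 1 := by
        rw [hγ.2.2 _ (htmem a') _ (htmem (a'+1))]
        have hmono : min ((a':ℕ):ℝ) L ≤ min (((a'+1:ℕ)):ℝ) L := by
          apply min_le_min _ le_rfl
          push_cast
          linarith
        have hle1 : min (((a'+1:ℕ)):ℝ) L ≤ min ((a':ℕ):ℝ) L + 1 := by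
          rcases le_total ((a':ℕ):ℝ) L with hcase | hcase
          · calc min (((a'+1:ℕ)):ℝ) L ≤ ((a'+1:ℕ):ℝ) := min_le_left _ _
              _ = min ((a':ℕ):ℝ) L + 1 := by rw [min_eq_left hcase]; push_cast; ring
          · calc min (((a'+1:ℕ)):ℝ) L ≤ L := min_le_right _ _
              _ ≤ min ((a':ℕ):ℝ) L + 1 := by rw [min_eq_right hcase]; linarith
        rw [abs_le]
        constructor <;> linarith
      have hdd : dist (z (j a')) (z (j (a'+1))) ≤ 2*M + 1 := by
        have u1 : dist (z (j a')) (z (j (a'+1))) ≤ dist (z (j a')) (γ (min ((a':ℕ):ℝ) L))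
            + dist (γ (min ((a':ℕ):ℝ) L)) (γ (min (((a'+1:ℕ)):ℝ) L))
            + dist (γ (min (((a'+1:ℕ)):ℝ) L)) (z (j (a'+1))) := dist_triangle4 _ _ _ _
        have u2 : dist (z (j a')) (γ (min ((a':ℕ):ℝ) L)) ≤ M := by
          rw [dist_comm]; exact hjd a'
        have u3 := hjd (a'+1)
        linarith
      have h2 := hz2 (j (a'+1)) (hjn (a'+1)) (j a') (hjn a')
      apply main a'
      have hge : (0:ℝ) ≤ (i:ℝ) - (j a':ℝ) := by
        have : ((j a':ℕ):ℝ) ≤ (i:ℝ) := by exact_mod_cast hPa'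
        linarith
      have hlt : (i:ℝ) ≤ (j (a'+1):ℝ) := by
        have : (i:ℝ) + 1 ≤ (j (a'+1):ℝ) := by exact_mod_cast hgt
        linarith
      have habs : (j (a'+1):ℝ) - (j a':ℝ) ≤ Λ*(2*M+1) + K₁ := by
        have h5 := le_abs_self ((j (a'+1):ℝ) - (j a':ℝ))
        rw [dist_comm (z (j a')) (z (j (a'+1)))] at hdd
        nlinarith
      rw [abs_of_nonneg hge]
      nlinarith
  · -- i is before the first projection index
    push_neg at hP0
    apply main 0
    have h1 : (i:ℝ) ≤ (j 0:ℝ) := by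
      have : (i:ℝ) + 1 ≤ (j 0:ℝ) := by exact_mod_cast hP0
      linarith
    rw [abs_of_nonpos (by linarith), neg_sub]
    nlinarith [Nat.cast_nonneg (α := ℝ) i]
end LemC
section QIChain
set_option maxHeartbeats 1000000

/-- Sampling a geodesic in `Y` at unit speed and mapping it back to `X` by the
quasi-inverse produces a quasi-geodesic chain. -/
lemma qi_chain {X' Y' : Type*} [MetricSpace X'] [MetricSpace Y'] (Λ C : ℝ) (hΛ : 1 ≤ Λ) (hC : 0 ≤ C)
    (g : Y' → X')
    (hgu : ∀ u v : Y', dist (g u) (g v) ≤ Λ * (dist u v + 3*C))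
    (hgl : ∀ u v : Y', dist u v ≤ Λ * dist (g u) (g v) + 3*C)
    {P Q : Y'} {σ : ℝ → Y'} (hσ : IsGeodesicSegBetween σ P Q) :
    ∃ (n : ℕ) (t : ℕ → ℝ), (∀ a : ℕ, t a ∈ Icc (0:ℝ) (dist P Q)) ∧
      g (σ (t 0)) = g P ∧ g (σ (t n)) = g Q ∧
      (∀ i < n, dist (g (σ (t i))) (g (σ (t (i+1)))) ≤ Λ*(1+3*C)) ∧
      (∀ i ≤ n, ∀ k ≤ n, |(i:ℝ)-(k:ℝ)| ≤ Λ * dist (g (σ (t i))) (g (σ (t k))) + (3*C+1)) ∧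
      (∀ s ∈ Icc (0:ℝ) (dist P Q), ∃ i ≤ n, dist (g (σ s)) (g (σ (t i))) ≤ Λ*(1+3*C)) := by
  set L := dist P Q with hLdef
  have hL0 : 0 ≤ L := dist_nonneg
  have hΛ0 : (0:ℝ) ≤ Λ := by linarith
  refine ⟨⌈L⌉₊, fun a => min (a:ℝ) L, ?_, ?_, ?_, ?_, ?_, ?_⟩
  case refine_1 => exact fun a => ⟨le_min (by positivity) hL0, min_le_right _ _⟩
  case refine_2 =>
    show g (σ (min ((0:ℕ):ℝ) L)) = g P
    rw [show min ((0:ℕ):ℝ) L = 0 by rw [Nat.cast_zero]; exact min_eq_left hL0, hσ.1]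
  case refine_3 =>
    show g (σ (min ((⌈L⌉₊:ℕ):ℝ) L)) = g Q
    rw [min_eq_right (Nat.le_ceil L), hσ.2.1]
  all_goals
    have hmem : ∀ a : ℕ, min (a:ℝ) L ∈ Icc (0:ℝ) L :=
      fun a => ⟨le_min (by positivity) hL0, min_le_right _ _⟩
  case refine_4 =>
    intro i _
    have hc : (((i+1):ℕ):ℝ) = (i:ℝ)+1 := by push_cast; ring
    have hds : dist (σ (min (i:ℝ) L)) (σ (min (((i+1):ℕ):ℝ) L)) = |min (i:ℝ) L - min (((i+1):ℕ):ℝ) L| :=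
      hσ.2.2 _ (hmem i) _ (hmem (i+1))
    have hlip : |min (i:ℝ) L - min (((i+1):ℕ):ℝ) L| ≤ 1 := by
      rw [hc]
      have hmono : min (i:ℝ) L ≤ min ((i:ℝ)+1) L := min_le_min (by linarith) le_rfl
      have hle1 : min ((i:ℝ)+1) L ≤ min (i:ℝ) L + 1 := by
        rcases le_total ((i:ℝ)) L with hcase | hcase
        · calc min ((i:ℝ)+1) L ≤ (i:ℝ)+1 := min_le_left _ _
            _ = min (i:ℝ) L + 1 := by rw [min_eq_left hcase]
        · calc min ((i:ℝ)+1) L ≤ L := min_le_right _ _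
            _ ≤ min (i:ℝ) L + 1 := by rw [min_eq_right hcase]; linarith
      rw [abs_le]
      constructor <;> linarith
    have := hgu (σ (min (i:ℝ) L)) (σ (min (((i+1):ℕ):ℝ) L))
    rw [hds] at this
    nlinarith
  case refine_5 =>
    intro i hi k hk
    have hub : |(i:ℝ) - (k:ℝ)| ≤ |min (i:ℝ) L - min (k:ℝ) L| + 1 := by
      have hnL : ((⌈L⌉₊:ℕ):ℝ) < L + 1 := Nat.ceil_lt_add_one hL0
      rcases le_total i k with hik | hik
      · have hc : (i:ℝ) ≤ (k:ℝ) := by exact_mod_cast hik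
        have hkn : (k:ℝ) ≤ ((⌈L⌉₊:ℕ):ℝ) := by exact_mod_cast hk
        have hmono : min (i:ℝ) L ≤ min (k:ℝ) L := min_le_min hc le_rfl
        have tk_lb : (k:ℝ) - 1 ≤ min (k:ℝ) L := le_min (by linarith) (by linarith)
        have ti_ub : min (i:ℝ) L ≤ (i:ℝ) := min_le_left _ _
        rw [abs_of_nonpos (by linarith), abs_of_nonpos (by linarith)]
        linarith
      · have hc : (k:ℝ) ≤ (i:ℝ) := by exact_mod_cast hik
        have hin : (i:ℝ) ≤ ((⌈L⌉₊:ℕ):ℝ) := by exact_mod_cast hi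
        have hmono : min (k:ℝ) L ≤ min (i:ℝ) L := min_le_min hc le_rfl
        have ti_lb : (i:ℝ) - 1 ≤ min (i:ℝ) L := le_min (by linarith) (by linarith)
        have tk_ub : min (k:ℝ) L ≤ (k:ℝ) := min_le_left _ _
        rw [abs_of_nonneg (by linarith), abs_of_nonneg (by linarith)]
        linarith
    have hds : dist (σ (min (i:ℝ) L)) (σ (min (k:ℝ) L)) = |min (i:ℝ) L - min (k:ℝ) L| :=
      hσ.2.2 _ (hmem i) _ (hmem k)
    have := hgl (σ (min (i:ℝ) L)) (σ (min (k:ℝ) L))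
    rw [hds] at this
    linarith
  case refine_6 =>
    intro s hs
    refine ⟨⌊s⌋₊, le_trans (Nat.floor_le_floor hs.2) (Nat.floor_le_ceil L), ?_⟩
    have hti : min ((⌊s⌋₊:ℕ):ℝ) L = ((⌊s⌋₊:ℕ):ℝ) :=
      min_eq_left (le_trans (Nat.floor_le hs.1) hs.2)
    have hds : dist (σ s) (σ (min ((⌊s⌋₊:ℕ):ℝ) L)) = |s - min ((⌊s⌋₊:ℕ):ℝ) L| :=
      hσ.2.2 s hs _ (hmem _)
    have h1 : ((⌊s⌋₊:ℕ):ℝ) ≤ s := Nat.floor_le hs.1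
    have h2 : s < ((⌊s⌋₊:ℕ):ℝ) + 1 := Nat.lt_floor_add_one s
    have hlip : |s - min ((⌊s⌋₊:ℕ):ℝ) L| ≤ 1 := by
      rw [hti, abs_of_nonneg (by linarith)]
      linarith
    have := hgu (σ s) (σ (min ((⌊s⌋₊:ℕ):ℝ) L))
    rw [hds] at this
    nlinarith

end QIChain
section Main
set_option maxHeartbeats 2000000

/-- The key step: the image of a geodesic triangle in `Y` is thin, where the
comparison is done via the quasi-inverse of `f` and the Morse lemma in `X`. -/
lemma key_side {X Y : Type*} [MetricSpace X] [MetricSpace Y]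
    (hX : GeodesicSpace X) (Λ C : ℝ) (f : X → Y) (hf : IsQuasiIsometry (X := X) Λ C f)
    (δ : ℝ) (hδ : 0 ≤ δ)
    (hthin : ∀ (A B C' : X) (γa γb γc : ℝ → X), IsGeodesicSegBetween γa B C' →
      IsGeodesicSegBetween γb A C' → IsGeodesicSegBetween γc A B →
      ThinTriangle δ (SideSet γa B C') (SideSet γb A C') (SideSet γc A B)) :
    ∃ δ' : ℝ, 0 ≤ δ' ∧ ∀ (P Q R : Y) (σ τ υ : ℝ → Y),
      IsGeodesicSegBetween σ P Q → IsGeodesicSegBetween τ P R → IsGeodesicSegBetween υ Q R →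
      ∀ p ∈ SideSet σ P Q, ∃ q ∈ SideSet τ P R ∪ SideSet υ Q R, dist p q ≤ δ' := by
  obtain ⟨hΛ, hC, hpair, hdense⟩ := hf
  have hΛ0 : (0:ℝ) < Λ := by linarith
  set g : Y → X := fun y => (hdense y).choose with hgdef
  have hg : ∀ y : Y, dist y (f (g y)) ≤ C := fun y => (hdense y).choose_spec
  have hgu : ∀ u v : Y, dist (g u) (g v) ≤ Λ * (dist u v + 3*C) := by
    intro u v
    have l1 := (hpair (g u) (g v)).1
    have l2 : dist (f (g u)) (f (g v)) ≤ dist u v + 2*C := by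
      have t1 : dist (f (g u)) (f (g v)) ≤ dist (f (g u)) u + dist u v + dist v (f (g v)) :=
        dist_triangle4 _ _ _ _
      have h1 := hg u
      have h2 := hg v
      rw [dist_comm (f (g u)) u] at t1
      linarith
    have l3 : 1/Λ * dist (g u) (g v) ≤ dist u v + 3*C := by linarith
    calc dist (g u) (g v) = Λ * (1/Λ * dist (g u) (g v)) := by field_simp
      _ ≤ Λ * (dist u v + 3*C) := mul_le_mul_of_nonneg_left l3 (le_of_lt hΛ0)
  have hgl : ∀ u v : Y, dist u v ≤ Λ * dist (g u) (g v) + 3*C := by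
    intro u v
    have l1 := (hpair (g u) (g v)).2
    have t1 : dist u v ≤ dist u (f (g u)) + dist (f (g u)) (f (g v)) + dist (f (g v)) v :=
      dist_triangle4 _ _ _ _
    rw [dist_comm (f (g v)) v] at t1
    linarith [hg u, hg v]
  have hg₀1 : 1 ≤ Λ*(1+3*C) := by nlinarith
  have hK₁0 : (0:ℝ) ≤ 3*C+1 := by linarith
  obtain ⟨M, hM1, hMorse⟩ := morse δ (Λ*(1+3*C)) Λ (3*C+1) hδ hg₀1 hΛ hK₁0 hX hthin
  have hM0 : 0 ≤ M := by linarith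
  have ha1 : (0:ℝ) ≤ Λ*(1+3*C) := mul_nonneg hΛ0.le (by linarith)
  have ha2 : (0:ℝ) ≤ Λ*(2*M+1) + Λ*M + 2*(3*C+1) := by
    have := mul_nonneg hΛ0.le (show (0:ℝ) ≤ 2*M+1 by linarith)
    have := mul_nonneg hΛ0.le hM0
    linarith
  have hM₂0 : 0 ≤ M + Λ*(1+3*C) * (Λ*(2*M+1) + Λ*M + 2*(3*C+1)) :=
    add_nonneg hM0 (mul_nonneg ha1 ha2)
  -- the "return to the Y-side" step via the Morse lemma
  have back : ∀ (P' R' : Y) (τ' : ℝ → Y), IsGeodesicSegBetween τ' P' R' →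
      ∀ (γ' : ℝ → X), IsGeodesicSegBetween γ' (g R') (g P') →
      ∀ q₂ ∈ SideSet γ' (g R') (g P'), ∃ q ∈ SideSet τ' P' R', dist q₂ (g q) ≤ M := by
    intro P' R' τ' hτ' γ' hγ' q₂ hq₂
    obtain ⟨n', t', htmem', ht0', htn', hgap', hlow', _⟩ := qi_chain Λ C hΛ hC g hgu hgl hτ'
    have hrev : IsGeodesicSegBetween (fun u => γ' (dist (g R') (g P') - u)) (g P') (g R') :=
      geod_rev hγ'
    have hrev' : IsGeodesicSegBetween (fun u => γ' (dist (g R') (g P') - u))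
        (g (τ' (t' 0))) (g (τ' (t' n'))) := by rw [ht0', htn']; exact hrev
    have hq₂' : q₂ ∈ SideSet (fun u => γ' (dist (g R') (g P') - u)) (g P') (g R') := by
      rw [sideSet_rev γ' (g R') (g P')]; exact hq₂
    obtain ⟨s'', hs'', hq₂eq⟩ := hq₂'
    have hdeq' : dist (g (τ' (t' 0))) (g (τ' (t' n'))) = dist (g P') (g R') := by
      rw [ht0', htn']
    obtain ⟨k, hk, hdk⟩ := hMorse n' (fun i => g (τ' (t' i))) hgap' hlow' _ hrev' s''
      (by rw [hdeq']; exact hs'')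
    refine ⟨τ' (t' k), ⟨t' k, htmem' k, rfl⟩, ?_⟩
    have : dist (γ' (dist (g R') (g P') - s'')) (g (τ' (t' k))) ≤ M := hdk
    rw [show γ' (dist (g R') (g P') - s'') = q₂ from hq₂eq] at this
    exact this
  refine ⟨Λ*(Λ*(1+3*C) + (M + Λ*(1+3*C) * (Λ*(2*M+1) + Λ*M + 2*(3*C+1))) + δ + M) + 3*C,
    by
      have := mul_nonneg hΛ0.le
        (show (0:ℝ) ≤ Λ*(1+3*C) + (M + Λ*(1+3*C) * (Λ*(2*M+1) + Λ*M + 2*(3*C+1))) + δ + M by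
          linarith)
      linarith, ?_⟩
  intro P Q R σ τ υ hσ hτ hυ p hp
  obtain ⟨γ₁, hγ₁⟩ := hX (g P) (g Q)
  obtain ⟨γb, hγb⟩ := hX (g R) (g Q)
  obtain ⟨γc, hγc⟩ := hX (g R) (g P)
  have thin := hthin (g R) (g P) (g Q) γ₁ γb γc hγ₁ hγb hγc
  obtain ⟨n, t, htmem, ht0, htn, hgap, hlow, hsamp⟩ := qi_chain Λ C hΛ hC g hgu hgl hσ
  have hγ₁' : IsGeodesicSegBetween γ₁ (g (σ (t 0))) (g (σ (t n))) := by
    rw [ht0, htn]; exact hγ₁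
  have hdeq : dist (g (σ (t 0))) (g (σ (t n))) = dist (g P) (g Q) := by rw [ht0, htn]
  have hBσ := hMorse n (fun i => g (σ (t i))) hgap hlow γ₁ hγ₁'
  have hCσ := chain_near_geod_pt Λ (3*C+1) (Λ*(1+3*C)) M hΛ hK₁0 hg₀1 hM0
    (z := fun i => g (σ (t i))) hgap hlow hγ₁' hBσ
  obtain ⟨s, hsIcc, rfl⟩ := hp
  obtain ⟨i₀, hi₀, hdi₀⟩ := hsamp s hsIcc
  obtain ⟨s', hs', hds'⟩ := hCσ i₀ hi₀
  have hx : γ₁ s' ∈ SideSet γ₁ (g P) (g Q) := ⟨s', by rw [← hdeq]; exact hs', rfl⟩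
  obtain ⟨q₂, hq₂, hdq₂⟩ := thin.1 (γ₁ s') hx
  -- common final computation
  have final : ∀ q : Y, dist q₂ (g q) ≤ M →
      dist (σ s) q ≤ Λ*(Λ*(1+3*C) + (M + Λ*(1+3*C) * (Λ*(2*M+1) + Λ*M + 2*(3*C+1))) + δ + M) + 3*C := by
    intro q hq
    have hgg : dist (g (σ s)) (g q) ≤
        Λ*(1+3*C) + (M + Λ*(1+3*C) * (Λ*(2*M+1) + Λ*M + 2*(3*C+1))) + δ + M := by
      have t1 : dist (g (σ s)) (g q) ≤ dist (g (σ s)) (g (σ (t i₀)))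
          + dist (g (σ (t i₀))) (γ₁ s') + dist (γ₁ s') (g q) := dist_triangle4 _ _ _ _
      have t2 : dist (γ₁ s') (g q) ≤ dist (γ₁ s') q₂ + dist q₂ (g q) := dist_triangle _ _ _
      linarith
    have u1 : dist (σ s) q ≤ dist (σ s) (f (g (σ s))) + dist (f (g (σ s))) (f (g q))
        + dist (f (g q)) q := dist_triangle4 _ _ _ _
    have u2 := (hpair (g (σ s)) (g q)).2
    have u3 : dist (f (g q)) q ≤ C := by rw [dist_comm]; exact hg q
    have u4 := hg (σ s)
    have u5 : Λ * dist (g (σ s)) (g q) ≤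
        Λ * (Λ*(1+3*C) + (M + Λ*(1+3*C) * (Λ*(2*M+1) + Λ*M + 2*(3*C+1))) + δ + M) :=
      mul_le_mul_of_nonneg_left hgg (le_of_lt hΛ0)
    linarith
  rcases hq₂ with hq₂ | hq₂
  · -- q₂ on the geodesic [gR, gQ] : project back to the side υ (between Q and R)
    obtain ⟨q, hqmem, hqd⟩ := back Q R υ hυ γb hγb q₂ hq₂
    exact ⟨q, Or.inr hqmem, final q hqd⟩
  · -- q₂ on the geodesic [gR, gP] : project back to the side τ (between P and R)
    obtain ⟨q, hqmem, hqd⟩ := back P R τ hτ γc hγc q₂ hq₂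
    exact ⟨q, Or.inl hqmem, final q hqd⟩

end Main
/-- **Gromov hyperbolicity is a quasi-isometry invariant** (for geodesic
spaces). -/
theorem gromovHyperbolic_of_quasiIsometry
    (X Y : Type*) [MetricSpace X] [MetricSpace Y]
    (hX : GeodesicSpace X) (hY : GeodesicSpace Y)
    (Λ C : ℝ) (f : X → Y) (hf : IsQuasiIsometry (X := X) Λ C f)
    (hhyp : GromovHyperbolic X) : GromovHyperbolic Y := by
  obtain ⟨δ, hδ0, hthin⟩ := hhyp
  obtain ⟨δ', hδ'0, hkey⟩ := key_side hX Λ C f hf δ hδ0 hthin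
  refine ⟨δ', hδ'0, ?_⟩
  intro A B C' γa γb γc hγa hγb hγc
  refine ⟨?_, ?_, ?_⟩
  · intro p hp
    obtain ⟨q, hq, hdq⟩ := hkey B C' A γa (fun u => γc (dist A B - u))
      (fun u => γb (dist A C' - u)) hγa (geod_rev hγc) (geod_rev hγb) p hp
    rcases hq with hq | hq
    · rw [sideSet_rev γc A B] at hq
      exact ⟨q, Or.inr hq, hdq⟩
    · rw [sideSet_rev γb A C'] at hq
      exact ⟨q, Or.inl hq, hdq⟩
  · intro p hp
    obtain ⟨q, hq, hdq⟩ := hkey A C' B γb γc (fun u => γa (dist B C' - u))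
      hγb hγc (geod_rev hγa) p hp
    rcases hq with hq | hq
    · exact ⟨q, Or.inr hq, hdq⟩
    · rw [sideSet_rev γa B C'] at hq
      exact ⟨q, Or.inl hq, hdq⟩
  · intro p hp
    obtain ⟨q, hq, hdq⟩ := hkey A B C' γc γb γa hγc hγb hγa p hp
    rcases hq with hq | hq
    · exact ⟨q, Or.inr hq, hdq⟩
    · exact ⟨q, Or.inl hq, hdq⟩
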